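/- For every real p ≥ 1 and every odd integer q ≥ 3, the minimum length, measured in the p-norm, of a tour of the instance I_q (defined below) is at most 14 · q^{(p+1)q}. -/

import Mathlib

open Classical

/-- The `p`-norm distance between two points of `ℝ²`. -/
noncomputable def pdist (p : ℝ) (a b : ℝ × ℝ) : ℝ :=
  (|a.1 - b.1| ^ p + |a.2 - b.2| ^ p) ^ (1 / p)

/-- The `y`-coordinate `S(i) = ∑_{s=0}^{i−1} q^{(p+1)(q−s)−1}` of the `i`-th
layer of the instance `I_q`. -/
noncomputable def layerY (p : ℝ) (q i : ℕ) : ℝ :=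
  ∑ s ∈ Finset.range i, (q : ℝ) ^ ((p + 1) * ((q : ℝ) - (s : ℝ)) - 1)

/-- The quantity `q^{(p+1)q}`. -/
noncomputable def bigM (p : ℝ) (q : ℕ) : ℝ := (q : ℝ) ^ ((p + 1) * (q : ℝ))

/-- The spacing `q^{(p+1)(q−i)}` between consecutive points on layer `i`. -/
noncomputable def spacing (p : ℝ) (q i : ℕ) : ℝ :=
  (q : ℝ) ^ ((p + 1) * ((q : ℝ) - (i : ℝ)))

/-- The number `q^{(p+1)i}` of spacing intervals on layer `i`
(as a natural number). -/
noncomputable def numIntervals (p : ℝ) (q i : ℕ) : ℕ :=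
  Nat.floor ((q : ℝ) ^ ((p + 1) * (i : ℝ)))

/-- The vertical distance `q^{(p+1)(q−i)−1}` between layers `i` and `i+1`
(as a natural number). -/
noncomputable def gapCount (p : ℝ) (q i : ℕ) : ℕ :=
  Nat.floor ((q : ℝ) ^ ((p + 1) * ((q : ℝ) - (i : ℝ)) - 1))

/-- The vertex set `V₁` of the instance `I_q`. -/
noncomputable def V1 (p : ℝ) (q : ℕ) : Finset (ℝ × ℝ) :=
  (Finset.range (q + 1)).biUnion fun i =>
    (Finset.range (numIntervals p q i + 1)).image fun j =>
      ((j : ℝ) * spacing p q i, layerY p q i)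

/-- The vertex set `V₂` of the instance `I_q` (a copy of `V₁` shifted to the
right by `2q^{(p+1)q}`). -/
noncomputable def V2 (p : ℝ) (q : ℕ) : Finset (ℝ × ℝ) :=
  (Finset.range (q + 1)).biUnion fun i =>
    (Finset.range (numIntervals p q i + 1)).image fun j =>
      ((j : ℝ) * spacing p q i + 2 * bigM p q, layerY p q i)

/-- The vertex set `V₃` of the instance `I_q` (the unit-spaced points filling
the gap on the topmost layer). -/
noncomputable def V3 (p : ℝ) (q : ℕ) : Finset (ℝ × ℝ) :=
  (Finset.Icc 1 (Nat.floor (bigM p q) - 1)).image fun j =>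
    (bigM p q + (j : ℝ), layerY p q q)

/-- The vertex set `V₄` of the instance `I_q` (the unit-spaced points on the
vertical segments `h_i` and `h'_i`). -/
noncomputable def V4 (p : ℝ) (q : ℕ) : Finset (ℝ × ℝ) :=
  (Finset.range q).biUnion fun i =>
    (Finset.Icc 1 (gapCount p q i - 1)).biUnion fun j =>
      if Even i then
        {((0 : ℝ), (j : ℝ) + layerY p q i), (3 * bigM p q, (j : ℝ) + layerY p q i)}
      else
        {(bigM p q, (j : ℝ) + layerY p q i), (2 * bigM p q, (j : ℝ) + layerY p q i)}

/-- The vertex set of the instance `I_q`. -/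
noncomputable def VIq (p : ℝ) (q : ℕ) : Finset (ℝ × ℝ) :=
  V1 p q ∪ V2 p q ∪ V3 p q ∪ V4 p q

/-- The length (in the `p`-norm) of an undirected edge of `ℝ²`. -/
noncomputable def edgeLen (p : ℝ) : Sym2 (ℝ × ℝ) → ℝ :=
  Sym2.lift ⟨fun a b => pdist p a b, fun a b => by
    simp only [pdist]
    rw [abs_sub_comm a.1 b.1, abs_sub_comm a.2 b.2]⟩

/-- The edge set `E₁` of the tour `T` of `I_q`: the horizontal edges joining
consecutive points of `V₁` on each layer. -/
noncomputable def E1 (p : ℝ) (q : ℕ) : Finset (Sym2 (ℝ × ℝ)) :=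
  (Finset.range (q + 1)).biUnion fun i =>
    (Finset.range (numIntervals p q i)).image fun j =>
      s(((j : ℝ) * spacing p q i, layerY p q i),
        (((j : ℝ) + 1) * spacing p q i, layerY p q i))

/-- The edge set `E₂` of the tour `T` of `I_q`: the horizontal edges joining
consecutive points of `V₂` on each layer. -/
noncomputable def E2 (p : ℝ) (q : ℕ) : Finset (Sym2 (ℝ × ℝ)) :=
  (Finset.range (q + 1)).biUnion fun i =>
    (Finset.range (numIntervals p q i)).image fun j =>
      s(((j : ℝ) * spacing p q i + 2 * bigM p q, layerY p q i),
        (((j : ℝ) + 1) * spacing p q i + 2 * bigM p q, layerY p q i))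

/-- The edge set `E₃` of the tour `T` of `I_q`: the unit-length horizontal edges
on the topmost layer between `x = q^{(p+1)q}` and `x = 2q^{(p+1)q}`. -/
noncomputable def E3 (p : ℝ) (q : ℕ) : Finset (Sym2 (ℝ × ℝ)) :=
  (Finset.range (Nat.floor (bigM p q))).image fun j =>
    s((bigM p q + (j : ℝ), layerY p q q), (bigM p q + (j : ℝ) + 1, layerY p q q))

/-- The edge set `E₄` of the tour `T` of `I_q`: the unit-length vertical edges
on the segments `h_i` and `h'_i`. -/
noncomputable def E4 (p : ℝ) (q : ℕ) : Finset (Sym2 (ℝ × ℝ)) :=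
  (Finset.range q).biUnion fun i =>
    (Finset.range (gapCount p q i)).biUnion fun j =>
      if Even i then
        { s(((0 : ℝ), (j : ℝ) + layerY p q i), ((0 : ℝ), (j : ℝ) + 1 + layerY p q i)),
          s((3 * bigM p q, (j : ℝ) + layerY p q i),
            (3 * bigM p q, (j : ℝ) + 1 + layerY p q i)) }
      else
        { s((bigM p q, (j : ℝ) + layerY p q i), (bigM p q, (j : ℝ) + 1 + layerY p q i)),
          s((2 * bigM p q, (j : ℝ) + layerY p q i),
            (2 * bigM p q, (j : ℝ) + 1 + layerY p q i)) }

/-- The edge set `E₅` of the tour `T` of `I_q`. -/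
noncomputable def E5 (p : ℝ) (q : ℕ) : Finset (Sym2 (ℝ × ℝ)) :=
  {s((bigM p q, (0 : ℝ)), (2 * bigM p q, (0 : ℝ)))}

/-- The edge set `E(T) = E₁ ∪ E₂ ∪ E₃ ∪ E₄ ∪ E₅` of the tour `T` of the
instance `I_q`. -/
noncomputable def ET (p : ℝ) (q : ℕ) : Finset (Sym2 (ℝ × ℝ)) :=
  E1 p q ∪ E2 p q ∪ E3 p q ∪ E4 p q ∪ E5 p q
/-- The length of the closed polygon (cyclic sequence) given by the list `L`. -/
noncomputable def cycleLength (p : ℝ) (L : List (ℝ × ℝ)) : ℝ :=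
  ((L.zip (L.rotate 1)).map fun e => pdist p e.1 e.2).sum

/-- `L` is a tour (Hamiltonian cycle) of the finite point set `V`. -/
def IsTour (V : Finset (ℝ × ℝ)) (L : List (ℝ × ℝ)) : Prop :=
  L.Nodup ∧ L.toFinset = V


namespace TP
open NNReal

abbrev Pt := ℝ × ℝ

def lexLe (a b : Pt) : Prop := a.1 < b.1 ∨ (a.1 = b.1 ∧ a.2 ≤ b.2)

instance : IsTrans Pt lexLe :=
  ⟨by rintro a b c (h | ⟨h, h'⟩) (g | ⟨g, g'⟩) <;>
      [skip; skip; skip; skip] <;> unfold lexLe <;>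
      first
      | (left; linarith)
      | (right; constructor <;> linarith)⟩

instance : IsAntisymm Pt lexLe :=
  ⟨by rintro ⟨a1,a2⟩ ⟨b1,b2⟩ (h | ⟨h, h'⟩) (g | ⟨g, g'⟩) <;> simp_all <;> linarith⟩

instance : IsTotal Pt lexLe :=
  ⟨by intro a b
      rcases lt_trichotomy a.1 b.1 with h | h | h
      · exact Or.inl (Or.inl h)
      · rcases le_total a.2 b.2 with h' | h'
        · exact Or.inl (Or.inr ⟨h, h'⟩)
        · exact Or.inr (Or.inr ⟨h.symm, h'⟩)
      · exact Or.inr (Or.inl h)⟩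

noncomputable instance : DecidableRel lexLe := fun _ _ => Classical.propDecidable _

noncomputable def pathLen (p : ℝ) (L : List Pt) : ℝ :=
  ((L.zip L.tail).map fun e => pdist p e.1 e.2).sum

noncomputable def pathSum (f : Pt → ℝ) (L : List Pt) : ℝ :=
  ((L.zip L.tail).map fun e => |f e.1 - f e.2|).sum

@[simp] lemma pathLen_nil (p : ℝ) : pathLen p [] = 0 := by simp [pathLen]
@[simp] lemma pathLen_single (p : ℝ) (a : Pt) : pathLen p [a] = 0 := by simp [pathLen]
@[simp] lemma pathLen_cons₂ (p : ℝ) (a b : Pt) (l : List Pt) :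
    pathLen p (a :: b :: l) = pdist p a b + pathLen p (b :: l) := by simp [pathLen]

@[simp] lemma pathSum_nil (f : Pt → ℝ) : pathSum f [] = 0 := by simp [pathSum]
@[simp] lemma pathSum_single (f : Pt → ℝ) (a : Pt) : pathSum f [a] = 0 := by simp [pathSum]
@[simp] lemma pathSum_cons₂ (f : Pt → ℝ) (a b : Pt) (l : List Pt) :
    pathSum f (a :: b :: l) = |f a - f b| + pathSum f (b :: l) := by simp [pathSum]

lemma pdist_le {p : ℝ} (hp : 1 ≤ p) (a b : Pt) :
    pdist p a b ≤ |a.1 - b.1| + |a.2 - b.2| := by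
  have key : ∀ A B : ℝ, 0 ≤ A → 0 ≤ B → (A ^ p + B ^ p) ^ (1/p) ≤ A + B := by
    intro A B hA hB
    have h := NNReal.rpow_add_rpow_le_add A.toNNReal B.toNNReal hp
    have h2 : (((A.toNNReal ^ p + B.toNNReal ^ p) ^ (1/p) : ℝ≥0) : ℝ) = ((A ^ p + B ^ p) ^ (1/p) : ℝ) := by
      push_cast [NNReal.coe_rpow, Real.coe_toNNReal _ hA, Real.coe_toNNReal _ hB]
      ring_nf
    calc ((A ^ p + B ^ p) ^ (1/p) : ℝ) = (((A.toNNReal ^ p + B.toNNReal ^ p) ^ (1/p) : ℝ≥0) : ℝ) := h2.symm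
      _ ≤ ((A.toNNReal + B.toNNReal : ℝ≥0) : ℝ) := by exact_mod_cast h
      _ = A + B := by push_cast [Real.coe_toNNReal _ hA, Real.coe_toNNReal _ hB]; ring
  exact key _ _ (abs_nonneg _) (abs_nonneg _)

lemma pathLen_le_sums {p : ℝ} (hp : 1 ≤ p) (L : List Pt) :
    pathLen p L ≤ pathSum Prod.fst L + pathSum Prod.snd L := by
  induction L with
  | nil => simp
  | cons a l ih =>
    cases l with
    | nil => simp
    | cons b l' =>
      simp only [pathLen_cons₂, pathSum_cons₂]
      have := pdist_le hp a b
      linarith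

lemma pathSum_chain_eq (f : Pt → ℝ) :
    ∀ (L : List Pt) (hne : L ≠ []), List.Chain' (fun a b => f a ≤ f b) L →
      pathSum f L = f (L.getLast hne) - f (L.head hne) := by
  intro L
  induction L with
  | nil => intro h; exact absurd rfl h
  | cons a l ih =>
    intro _ hch
    cases l with
    | nil => simp
    | cons b l' =>
      unfold List.Chain' at hch
      rw [List.isChain_cons_cons] at hch
      have h1 := ih (by simp) hch.2
      simp only [pathSum_cons₂]
      rw [h1]
      have hab : f a ≤ f b := hch.1
      have habs : |f a - f b| = f b - f a := by rw [abs_sub_comm]; exact abs_of_nonneg (by linarith)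
      have hlast : (a :: b :: l').getLast (by simp) = (b :: l').getLast (by simp) :=
        List.getLast_cons (by simp)
      rw [hlast, habs]
      simp only [List.head_cons]
      ring

lemma pathSum_le_double_aux (f g : Pt → ℝ) :
    ∀ (l : List Pt) (a : Pt), (∀ v ∈ a :: l, 0 ≤ g v) →
      (∀ u ∈ a :: l, ∀ v ∈ a :: l, |f u - f v| ≤ g u + g v) →
      pathSum f (a :: l) ≤ g a + 2 * (l.map g).sum := by
  intro l
  induction l with
  | nil =>
    intro a hg _
    have := hg a (by simp)
    simp only [pathSum_single, List.map_nil, List.sum_nil]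
    linarith
  | cons b l' ih =>
    intro a hg hfg
    have h1 : pathSum f (a :: b :: l') = |f a - f b| + pathSum f (b :: l') := by simp
    have h2 := ih b (fun v hv => hg v (by simp at hv ⊢; tauto))
      (fun u hu v hv => hfg u (by simp at hu ⊢; tauto) v (by simp at hv ⊢; tauto))
    have h3 := hfg a (by simp) b (by simp)
    simp only [List.map_cons, List.sum_cons]
    linarith

lemma pathSum_le_double (f g : Pt → ℝ) (L : List Pt) (hg : ∀ v ∈ L, 0 ≤ g v)
    (hfg : ∀ u ∈ L, ∀ v ∈ L, |f u - f v| ≤ g u + g v) :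
    pathSum f L ≤ 2 * (L.map g).sum := by
  cases L with
  | nil => simp
  | cons a l =>
    have := pathSum_le_double_aux f g l a hg hfg
    have hga := hg a (by simp)
    simp only [List.map_cons, List.sum_cons]
    linarith

lemma pathLen_append (p : ℝ) :
    ∀ (A B : List Pt) (hA : A ≠ []) (hB : B ≠ []),
      pathLen p (A ++ B) = pathLen p A + pdist p (A.getLast hA) (B.head hB) + pathLen p B := by
  intro A
  induction A with
  | nil => intro B h; exact absurd rfl h
  | cons a l ih =>
    intro B _ hB
    cases l with
    | nil =>
      cases B with
      | nil => exact absurd rfl hB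
      | cons b t => simp [pathLen_cons₂]
    | cons a' l' =>
      have h1 : (a :: a' :: l') ++ B = a :: a' :: (l' ++ B) := by simp
      rw [h1]
      have h2 : a' :: (l' ++ B) = (a' :: l') ++ B := by simp
      rw [pathLen_cons₂, h2, ih B (by simp) hB]
      have : (a :: a' :: l').getLast (by simp) = (a' :: l').getLast (by simp) :=
        List.getLast_cons (by simp)
      rw [this]
      simp [pathLen_cons₂]
      ring

lemma cycleLength_eq_aux (p : ℝ) : ∀ (l : List Pt) (a c : Pt),
    (((a :: l).zip (l ++ [c])).map fun e => pdist p e.1 e.2).sum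
      = pathLen p (a :: l) + pdist p ((a :: l).getLast (by simp)) c := by
  intro l
  induction l with
  | nil => intro a c; simp [pathLen]
  | cons b l' ih =>
    intro a c
    have h1 : ((a :: b :: l').zip ((b :: l') ++ [c])) = (a, b) :: ((b :: l').zip (l' ++ [c])) := by
      simp
    rw [h1]
    simp only [List.map_cons, List.sum_cons]
    rw [ih b c]
    have : (a :: b :: l').getLast (by simp) = (b :: l').getLast (by simp) :=
      List.getLast_cons (by simp)
    rw [this, pathLen_cons₂]
    ring

end TP

namespace TP

lemma cycleLength_eq (p : ℝ) (L : List Pt) (h : L ≠ []) :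
    cycleLength p L = pathLen p L + pdist p (L.getLast h) (L.head h) := by
  cases L with
  | nil => exact absurd rfl h
  | cons a l =>
    have hrot : (a :: l).rotate 1 = l ++ [a] := by
      rw [List.rotate_cons_succ, List.rotate_zero]
    rw [cycleLength, hrot]
    simpa using cycleLength_eq_aux p l a a

lemma chain'_snd_of_sorted (c : ℝ) :
    ∀ L : List Pt, List.Pairwise lexLe L → (∀ v ∈ L, v.1 = c) →
      List.Chain' (fun a b : Pt => a.2 ≤ b.2) L := by
  intro L
  induction L with
  | nil => intro _ _; exact List.isChain_nil
  | cons a l ih =>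
    intro hs hmem
    rw [List.pairwise_cons] at hs
    cases l with
    | nil => unfold List.Chain'; simp
    | cons b l' =>
      unfold List.Chain'
      rw [List.isChain_cons_cons]
      refine ⟨?_, ih hs.2 (fun v hv => hmem v (List.mem_cons_of_mem a hv))⟩
      have hr := hs.1 b (by simp)
      rcases hr with h1 | ⟨_, h2⟩
      · exfalso
        have ha := hmem a (by simp)
        have hb := hmem b (by simp)
        rw [ha, hb] at h1; exact lt_irrefl c h1
      · exact h2

section SortSec

variable (W : Finset Pt)

noncomputable def blk : List Pt := Finset.sort W lexLe

lemma blk_ne_nil (h : W.Nonempty) : blk W ≠ [] := by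
  intro hc
  have hl := Finset.length_sort (s := W) lexLe
  rw [show Finset.sort W lexLe = blk W from rfl, hc] at hl
  simp only [List.length_nil] at hl
  exact h.ne_empty (Finset.card_eq_zero.mp hl.symm)

lemma blk_nodup : (blk W).Nodup := Finset.sort_nodup W lexLe

lemma blk_toFinset : (blk W).toFinset = W := Finset.sort_toFinset W lexLe

lemma mem_blk {v : Pt} : v ∈ blk W ↔ v ∈ W := Finset.mem_sort lexLe

lemma blk_sorted : List.Pairwise lexLe (blk W) := Finset.pairwise_sort W lexLe

lemma head_blk_mem (h : blk W ≠ []) : (blk W).head h ∈ W :=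
  (mem_blk W).1 (List.head_mem h)

lemma getLast_blk_mem (h : blk W ≠ []) : (blk W).getLast h ∈ W :=
  (mem_blk W).1 (List.getLast_mem h)

lemma chain'_fst_blk : List.Chain' (fun a b : Pt => a.1 ≤ b.1) (blk W) := by
  have h := (blk_sorted W).isChain
  exact h.imp (fun a b hab => by
    rcases hab with h1 | ⟨h1, _⟩
    · exact le_of_lt h1
    · exact le_of_eq h1)

lemma pathSum_fst_blk (h : blk W ≠ []) :
    pathSum Prod.fst (blk W) = ((blk W).getLast h).1 - ((blk W).head h).1 :=
  pathSum_chain_eq Prod.fst (blk W) h (chain'_fst_blk W)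

lemma pathSum_snd_blk_const (c Y : ℝ) (hc : ∀ v ∈ W, v.1 = c)
    (hy : ∀ v ∈ W, 0 ≤ v.2 ∧ v.2 ≤ Y) (h : blk W ≠ []) :
    pathSum Prod.snd (blk W) ≤ Y := by
  rw [pathSum_chain_eq Prod.snd (blk W) h
    (chain'_snd_of_sorted c (blk W) (blk_sorted W) (fun v hv => hc v ((mem_blk W).1 hv)))]
  have h1 := hy _ (getLast_blk_mem W h)
  have h2 := hy _ (head_blk_mem W h)
  linarith [h1.2, h2.1]

lemma map_sum_blk (g : Pt → ℝ) : ((blk W).map g).sum = ∑ v ∈ W, g v := by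
  have hperm : List.Perm (blk W) W.toList := Finset.sort_perm_toList W lexLe
  rw [(hperm.map g).sum_eq]
  exact Finset.sum_map_toList W g

lemma pathSum_snd_blk_double (Y : ℝ) (hy : ∀ v ∈ W, v.2 ≤ Y) :
    pathSum Prod.snd (blk W) ≤ 2 * ∑ v ∈ W, (Y - v.2) := by
  rw [← map_sum_blk W (fun v => Y - v.2)]
  apply pathSum_le_double
  · intro v hv
    have := hy v ((mem_blk W).1 hv)
    linarith
  · intro u hu v hv
    have h1 := hy u ((mem_blk W).1 hu)
    have h2 := hy v ((mem_blk W).1 hv)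
    rw [abs_sub_le_iff]
    constructor <;> linarith

end SortSec
end TP

namespace TP

section Arith

variable {p : ℝ} {q : ℕ}

lemma qR_pos (hq : 3 ≤ q) : (0:ℝ) < q := by
  have : (3:ℝ) ≤ q := by exact_mod_cast hq
  linarith

lemma rpow_pos (hq : 3 ≤ q) (e : ℝ) : (0:ℝ) < (q:ℝ) ^ e :=
  Real.rpow_pos_of_pos (qR_pos hq) e

lemma spacing_pos (hq : 3 ≤ q) (i : ℕ) : 0 < spacing p q i := rpow_pos hq _

lemma bigM_pos (hq : 3 ≤ q) : 0 < bigM p q := rpow_pos hq _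

lemma Q_ge_nine (hp : 1 ≤ p) (hq : 3 ≤ q) : (9:ℝ) ≤ (q:ℝ) ^ (p + 1) := by
  have h3 : (3:ℝ) ≤ (q:ℝ) := by exact_mod_cast hq
  have h1 : (9:ℝ) = (3:ℝ) ^ (2:ℝ) := by
    rw [show (2:ℝ) = ((2:ℕ):ℝ) by norm_num, Real.rpow_natCast]; norm_num
  rw [h1]
  calc (3:ℝ) ^ (2:ℝ) ≤ (3:ℝ) ^ (p+1) := by
        apply Real.rpow_le_rpow_of_exponent_le (by norm_num)
        linarith
    _ ≤ (q:ℝ) ^ (p+1) := by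
        apply Real.rpow_le_rpow (by norm_num) h3
        linarith

lemma bigM_ge_nine (hp : 1 ≤ p) (hq : 3 ≤ q) : (9:ℝ) ≤ bigM p q := by
  have h3 : (3:ℝ) ≤ (q:ℝ) := by exact_mod_cast hq
  have h2 : (2:ℝ) ≤ (p+1) * q := by nlinarith
  have h1 : (9:ℝ) = (3:ℝ) ^ (2:ℝ) := by
    rw [show (2:ℝ) = ((2:ℕ):ℝ) by norm_num, Real.rpow_natCast]; norm_num
  rw [bigM, h1]
  calc (3:ℝ) ^ (2:ℝ) ≤ (3:ℝ) ^ ((p+1) * q) :=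
        Real.rpow_le_rpow_of_exponent_le (by norm_num) h2
    _ ≤ (q:ℝ) ^ ((p+1) * q) := by
        apply Real.rpow_le_rpow (by norm_num) h3
        nlinarith

lemma spacing_zero (hq : 3 ≤ q) : spacing p q 0 = bigM p q := by
  rw [spacing, bigM]; norm_num

lemma layerY_zero : layerY p q 0 = 0 := by simp [layerY]

lemma layerY_succ (i : ℕ) :
    layerY p q (i+1) = layerY p q i + (q:ℝ) ^ ((p + 1) * ((q:ℝ) - i) - 1) := by
  rw [layerY, layerY, Finset.sum_range_succ]

lemma layerY_nonneg (hq : 3 ≤ q) (i : ℕ) : 0 ≤ layerY p q i := by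
  apply Finset.sum_nonneg
  intro s _
  exact (rpow_pos hq _).le

lemma layerY_strictMono (hq : 3 ≤ q) : StrictMono (layerY p q) := by
  apply strictMono_nat_of_lt_succ
  intro i
  rw [layerY_succ]
  have := rpow_pos hq ((p + 1) * ((q:ℝ) - i) - 1)
  linarith

lemma layerY_mono (hq : 3 ≤ q) {i j : ℕ} (h : i ≤ j) : layerY p q i ≤ layerY p q j :=
  (layerY_strictMono hq).monotone h

lemma gap_eq (hq : 3 ≤ q) (i : ℕ) :
    (q:ℝ) ^ ((p + 1) * ((q:ℝ) - i) - 1) = spacing p q i / q := by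
  rw [spacing, Real.rpow_sub (qR_pos hq), Real.rpow_one]

lemma spacing_succ (hq : 3 ≤ q) (i : ℕ) :
    spacing p q (i+1) = spacing p q i / (q:ℝ) ^ (p+1) := by
  rw [spacing, spacing, ← Real.rpow_sub (qR_pos hq)]
  congr 1
  push_cast
  ring

/-- The key vertical-distance bound: `S(q) − S(i) ≤ (9/(8q)) · spacing i`. -/
lemma dist_bound (hp : 1 ≤ p) (hq : 3 ≤ q) :
    ∀ k i, i + k = q → layerY p q q - layerY p q i ≤ 9 / (8 * q) * spacing p q i := by
  intro k
  induction k with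
  | zero =>
    intro i hi
    rw [show i = q by omega]
    have h1 := spacing_pos (p := p) hq q
    have h2 := qR_pos hq
    have : (0:ℝ) < 9 / (8 * q) := by positivity
    nlinarith
  | succ k ih =>
    intro i hi
    have hi1 : (i+1) + k = q := by omega
    have h1 := ih (i+1) hi1
    have h2 : layerY p q q - layerY p q i
        = (layerY p q q - layerY p q (i+1)) + (q:ℝ) ^ ((p + 1) * ((q:ℝ) - i) - 1) := by
      rw [layerY_succ]; ring
    rw [h2, gap_eq hq]
    rw [spacing_succ hq] at h1
    have hQ := Q_ge_nine hp hq
    have hq0 := qR_pos hq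
    have hsp := spacing_pos (p := p) hq i
    have hQ0 : (0:ℝ) < (q:ℝ) ^ (p+1) := rpow_pos hq _
    have key : 9 / (8 * (q:ℝ)) * (spacing p q i / (q:ℝ)^(p+1)) + spacing p q i / q
        ≤ 9 / (8 * q) * spacing p q i := by
      set a := spacing p q i with ha
      have h9 : 9 * a / (q:ℝ)^(p+1) ≤ a := by
        rw [div_le_iff₀ hQ0]
        nlinarith
      have e1 : 9 / (8 * (q:ℝ)) * (a / (q:ℝ)^(p+1)) + a / q
          = (9 * a / (q:ℝ)^(p+1) + 8 * a) / (8 * q) := by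
        field_simp
      have e2 : 9 / (8 * (q:ℝ)) * a = 9 * a / (8 * q) := by ring
      rw [e1, e2]
      gcongr
      linarith
    linarith
end Arith
end TP

namespace TP

section Geo

variable {p : ℝ} {q : ℕ}

noncomputable def genV (p : ℝ) (q : ℕ) (c : ℝ) : Finset Pt :=
  (Finset.range (q + 1)).biUnion fun i =>
    (Finset.range (numIntervals p q i + 1)).image fun j : ℕ =>
      ((j : ℝ) * spacing p q i + c, layerY p q i)

lemma V1_eq : V1 p q = genV p q 0 := by
  ext v
  simp [V1, genV]

lemma V2_eq : V2 p q = genV p q (2 * bigM p q) := by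
  ext v
  simp [V2, genV]

lemma pow_mul_spacing (hq : 3 ≤ q) (i : ℕ) :
    (q:ℝ) ^ ((p+1) * (i:ℝ)) * spacing p q i = bigM p q := by
  rw [spacing, bigM, ← Real.rpow_add (qR_pos hq)]
  congr 1
  ring

lemma numIntervals_le (hq : 3 ≤ q) (i : ℕ) :
    (numIntervals p q i : ℝ) ≤ (q:ℝ) ^ ((p+1) * (i:ℝ)) :=
  Nat.floor_le (rpow_pos hq _).le

lemma genV_bounds (hq : 3 ≤ q) {c : ℝ} {v : Pt} (hv : v ∈ genV p q c) :
    c ≤ v.1 ∧ v.1 ≤ c + bigM p q ∧ 0 ≤ v.2 ∧ v.2 ≤ layerY p q q := by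
  rw [genV] at hv
  obtain ⟨i, hi, hv⟩ := Finset.mem_biUnion.mp hv
  obtain ⟨j, hj, rfl⟩ := Finset.mem_image.mp hv
  rw [Finset.mem_range] at hi hj
  have hiq : i ≤ q := by omega
  have hjn : (j:ℝ) ≤ (numIntervals p q i : ℝ) := by
    exact_mod_cast Nat.lt_succ_iff.mp hj
  have hsp := spacing_pos (p := p) hq i
  have hx1 : (0:ℝ) ≤ (j:ℝ) * spacing p q i := by positivity
  have hx2 : (j:ℝ) * spacing p q i ≤ bigM p q := by
    calc (j:ℝ) * spacing p q i ≤ (q:ℝ) ^ ((p+1) * (i:ℝ)) * spacing p q i := by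
          apply mul_le_mul_of_nonneg_right _ hsp.le
          exact hjn.trans (numIntervals_le hq i)
      _ = bigM p q := pow_mul_spacing hq i
  refine ⟨by simp; linarith, by simp; linarith, layerY_nonneg hq i, layerY_mono hq hiq⟩

lemma floor_bigM_ge (hp : 1 ≤ p) (hq : 3 ≤ q) : 2 ≤ Nat.floor (bigM p q) := by
  apply Nat.le_floor
  have := bigM_ge_nine hp hq
  push_cast
  linarith

lemma V3_bounds (hp : 1 ≤ p) (hq : 3 ≤ q) {v : Pt} (hv : v ∈ V3 p q) :
    bigM p q + 1 ≤ v.1 ∧ v.1 ≤ 2 * bigM p q - 1 ∧ v.2 = layerY p q q := by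
  rw [V3] at hv
  obtain ⟨j, hj, rfl⟩ := Finset.mem_image.mp hv
  obtain ⟨m, ⟨hj1, hj2⟩, rfl⟩ : ∃ m : ℕ, (1 ≤ m ∧ m ≤ Nat.floor (bigM p q) - 1) ∧ (m:ℝ) = j := by
    simpa using hj
  have hfl : 2 ≤ Nat.floor (bigM p q) := floor_bigM_ge hp hq
  have hcast : ((Nat.floor (bigM p q) - 1 : ℕ) : ℝ) = (Nat.floor (bigM p q) : ℝ) - 1 := by
    rw [Nat.cast_sub (by omega)]
    norm_num
  have h2 : (m:ℝ) ≤ (Nat.floor (bigM p q) : ℝ) - 1 := by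
    rw [← hcast]; exact_mod_cast hj2
  have h3 : (Nat.floor (bigM p q) : ℝ) ≤ bigM p q := Nat.floor_le (bigM_pos hq).le
  have h1 : (1:ℝ) ≤ (m:ℝ) := by exact_mod_cast hj1
  refine ⟨by simp; linarith, by simp; linarith, rfl⟩

lemma V4_bounds (hp : 1 ≤ p) (hq : 3 ≤ q) {v : Pt} (hv : v ∈ V4 p q) :
    (v.1 = 0 ∨ v.1 = bigM p q ∨ v.1 = 2 * bigM p q ∨ v.1 = 3 * bigM p q) ∧
      0 ≤ v.2 ∧ v.2 ≤ layerY p q q := by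
  rw [V4] at hv
  obtain ⟨i, hi, hv⟩ := Finset.mem_biUnion.mp hv
  obtain ⟨j, hj, hv⟩ := Finset.mem_biUnion.mp hv
  rw [Finset.mem_range] at hi
  rw [Finset.mem_Icc] at hj
  obtain ⟨hj1, hj2⟩ := hj
  have hy : 0 ≤ (j:ℝ) + layerY p q i ∧ (j:ℝ) + layerY p q i ≤ layerY p q q := by
    constructor
    · have := layerY_nonneg (p := p) hq i
      positivity
    · have hg2 : 2 ≤ gapCount p q i := by omega
      have hcast : ((gapCount p q i - 1 : ℕ) : ℝ) = (gapCount p q i : ℝ) - 1 := by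
        rw [Nat.cast_sub (by omega)]; norm_num
      have hj2' : (j:ℝ) ≤ (gapCount p q i : ℝ) - 1 := by
        rw [← hcast]; exact_mod_cast hj2
      have hfl : (gapCount p q i : ℝ) ≤ (q:ℝ) ^ ((p + 1) * ((q:ℝ) - i) - 1) :=
        Nat.floor_le (rpow_pos hq _).le
      have hsucc : layerY p q (i+1) = layerY p q i + (q:ℝ) ^ ((p + 1) * ((q:ℝ) - i) - 1) :=
        layerY_succ i
      have hmono : layerY p q (i+1) ≤ layerY p q q := layerY_mono hq (by omega)
      linarith
  split_ifs at hv with hev <;>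
    rw [Finset.mem_insert, Finset.mem_singleton] at hv <;>
    rcases hv with rfl | rfl <;>
    simp only <;> tauto

lemma mem_VIq_iff {v : Pt} :
    v ∈ VIq p q ↔ v ∈ V1 p q ∨ v ∈ V2 p q ∨ v ∈ V3 p q ∨ v ∈ V4 p q := by
  simp [VIq, Finset.mem_union, or_assoc]

lemma VIq_bounds (hp : 1 ≤ p) (hq : 3 ≤ q) {v : Pt} (hv : v ∈ VIq p q) :
    0 ≤ v.1 ∧ v.1 ≤ 3 * bigM p q ∧ 0 ≤ v.2 ∧ v.2 ≤ layerY p q q := by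
  have hM := bigM_ge_nine hp hq
  rw [mem_VIq_iff] at hv
  rcases hv with h | h | h | h
  · rw [V1_eq] at h
    have := genV_bounds hq h
    refine ⟨by linarith [this.1], by linarith [this.2.1], this.2.2⟩
  · rw [V2_eq] at h
    have := genV_bounds hq h
    refine ⟨by linarith [this.1], by linarith [this.2.1], this.2.2⟩
  · have := V3_bounds hp hq h
    have hS0 := layerY_nonneg (p := p) hq q
    refine ⟨by linarith [this.1], by linarith [this.2.1], by rw [this.2.2]; exact hS0,
      le_of_eq this.2.2⟩
  · have := V4_bounds hp hq h
    rcases this.1 with h1 | h1 | h1 | h1 <;> rw [h1] <;>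
      exact ⟨by linarith, by linarith, this.2⟩

lemma mem_genV0_of_x (hp : 1 ≤ p) (hq : 3 ≤ q) {v : Pt} (hv : v ∈ VIq p q)
    (h1 : 0 < v.1) (h2 : v.1 < bigM p q) : v ∈ genV p q 0 := by
  have hM := bigM_ge_nine hp hq
  rw [mem_VIq_iff] at hv
  rcases hv with h | h | h | h
  · rwa [V1_eq] at h
  · rw [V2_eq] at h
    have := (genV_bounds hq h).1
    linarith
  · have := (V3_bounds hp hq h).1
    linarith
  · rcases (V4_bounds hp hq h).1 with hx | hx | hx | hx <;> rw [hx] at h1 h2 <;> linarith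

lemma mem_genV2_of_x (hp : 1 ≤ p) (hq : 3 ≤ q) {v : Pt} (hv : v ∈ VIq p q)
    (h1 : 2 * bigM p q < v.1) (h2 : v.1 < 3 * bigM p q) : v ∈ genV p q (2 * bigM p q) := by
  have hM := bigM_ge_nine hp hq
  rw [mem_VIq_iff] at hv
  rcases hv with h | h | h | h
  · rw [V1_eq] at h
    have := (genV_bounds hq h).2.1
    simp only [zero_add] at this
    linarith
  · rwa [V2_eq] at h
  · have := (V3_bounds hp hq h).2.1
    linarith
  · rcases (V4_bounds hp hq h).1 with hx | hx | hx | hx <;> rw [hx] at h1 h2 <;> linarith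

lemma top_y_of_x (hp : 1 ≤ p) (hq : 3 ≤ q) {v : Pt} (hv : v ∈ VIq p q)
    (h1 : bigM p q < v.1) (h2 : v.1 < 2 * bigM p q) : v.2 = layerY p q q := by
  have hM := bigM_ge_nine hp hq
  rw [mem_VIq_iff] at hv
  rcases hv with h | h | h | h
  · rw [V1_eq] at h
    have := (genV_bounds hq h).2.1
    simp only [zero_add] at this
    linarith
  · rw [V2_eq] at h
    have := (genV_bounds hq h).1
    linarith
  · exact (V3_bounds hp hq h).2.2
  · rcases (V4_bounds hp hq h).1 with hx | hx | hx | hx <;> rw [hx] at h1 h2 <;> linarith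

end Geo
end TP

namespace TP

section Sums

variable {p : ℝ} {q : ℕ}

lemma spacing_self (hq : 3 ≤ q) : spacing p q q = 1 := by
  rw [spacing]
  have h : (p+1) * ((q:ℝ) - (q:ℕ)) = 0 := by push_cast; ring
  rw [h, Real.rpow_zero]

lemma layerY_inj (hq : 3 ≤ q) {i j : ℕ} (h : layerY p q i = layerY p q j) : i = j :=
  (layerY_strictMono (p := p) hq).injective h

/-- The central counting bound: the total elevation-deficit of the interior
points of a (shifted) copy of `V₁` is at most `(q−1) · (9/(8q)) · M`. -/
lemma sum_d_bound (hp : 1 ≤ p) (hq : 3 ≤ q) (c : ℝ) (W : Finset Pt)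
    (hW : ∀ v ∈ W, v ∈ genV p q c ∧ c < v.1 ∧ v.1 < c + bigM p q) :
    ∑ v ∈ W, (layerY p q q - v.2) ≤ ((q:ℝ) - 1) * (9 / (8*(q:ℝ)) * bigM p q) := by
  classical
  have hM := bigM_pos (p := p) hq
  have hq0 := qR_pos (q := q) hq
  set S := layerY p q q with hS
  set C := 9 / (8*(q:ℝ)) * bigM p q with hC
  have hC0 : 0 ≤ C := by rw [hC]; positivity
  set f : Pt → ℝ := fun v => if c < v.1 ∧ v.1 < c + bigM p q then S - v.2 else 0 with hf
  have step1 : ∑ v ∈ W, (S - v.2) = ∑ v ∈ W, f v := by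
    apply Finset.sum_congr rfl
    intro v hv
    rw [hf]
    simp only
    rw [if_pos (hW v hv).2]
  have step2 : ∑ v ∈ W, f v ≤ ∑ v ∈ genV p q c, f v := by
    apply Finset.sum_le_sum_of_subset_of_nonneg (fun v hv => (hW v hv).1)
    intro v hv _
    rw [hf]
    simp only
    split_ifs with h
    · have := (genV_bounds hq hv).2.2.2
      linarith
    · exact le_refl 0
  have hdisj : (↑(Finset.range (q+1)) : Set ℕ).PairwiseDisjoint
      (fun i => (Finset.range (numIntervals p q i + 1)).image
        fun j : ℕ => ((j : ℝ) * spacing p q i + c, layerY p q i)) := by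
    intro i _ i' _ hne
    simp only [Function.onFun]
    rw [Finset.disjoint_left]
    intro v hv hv'
    obtain ⟨j, _, rfl⟩ := Finset.mem_image.mp hv
    obtain ⟨j', _, heq⟩ := Finset.mem_image.mp hv'
    apply hne
    exact (layerY_inj hq (congrArg Prod.snd heq)).symm
  have step3 : ∑ v ∈ genV p q c, f v
      = ∑ i ∈ Finset.range (q+1), ∑ j ∈ Finset.range (numIntervals p q i + 1),
          f ((j : ℝ) * spacing p q i + c, layerY p q i) := by
    rw [genV, Finset.sum_biUnion hdisj]
    apply Finset.sum_congr rfl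
    intro i _
    rw [Finset.sum_image]
    intro a _ b _ hab
    have h1 := congrArg Prod.fst hab
    simp only at h1
    have hsp := spacing_pos (p := p) hq i
    have h2 : (a:ℝ) * spacing p q i = (b:ℝ) * spacing p q i := by linarith
    have h3 : (a:ℝ) = (b:ℝ) := mul_right_cancel₀ hsp.ne' h2
    exact_mod_cast h3
  have row_bound : ∀ i ∈ Finset.range (q+1),
      ∑ j ∈ Finset.range (numIntervals p q i + 1),
          f ((j : ℝ) * spacing p q i + c, layerY p q i)
        ≤ (if i = 0 ∨ i = q then 0 else C) := by
    intro i hi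
    rw [Finset.mem_range] at hi
    have hiq : i ≤ q := by omega
    by_cases hi0 : i = 0
    · subst hi0
      rw [if_pos (Or.inl rfl)]
      apply le_of_eq
      apply Finset.sum_eq_zero
      intro j _
      rw [hf]
      simp only
      rw [spacing_zero hq]
      split_ifs with hcon
      · exfalso
        rcases Nat.eq_zero_or_pos j with rfl | hj
        · have := hcon.1
          simp only [Nat.cast_zero, zero_mul, zero_add] at this
          exact lt_irrefl c this
        · have hj1 : (1:ℝ) ≤ (j:ℝ) := by exact_mod_cast hj
          have h2 := hcon.2
          nlinarith
      · rfl
    · by_cases hiq' : i = q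
      · subst hiq'
        rw [if_pos (Or.inr rfl)]
        apply le_of_eq
        apply Finset.sum_eq_zero
        intro j _
        rw [hf]
        simp only
        split_ifs
        · rw [hS, sub_self]
        · rfl
      · rw [if_neg (by tauto)]
        set d := S - layerY p q i with hd
        have hd0 : 0 ≤ d := by rw [hd, hS]; linarith [layerY_mono (p := p) hq hiq]
        have hstep : ∀ j ∈ Finset.range (numIntervals p q i + 1),
            f ((j : ℝ) * spacing p q i + c, layerY p q i) ≤ (if j = 0 then 0 else d) := by
          intro j _
          rcases Nat.eq_zero_or_pos j with rfl | hj
          · rw [if_pos rfl, hf]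
            simp only
            split_ifs with hcon
            · exfalso
              have := hcon.1
              simp only [Nat.cast_zero, zero_mul, zero_add] at this
              exact lt_irrefl c this
            · exact le_refl 0
          · rw [if_neg (by omega), hf]
            simp only
            split_ifs
            · exact le_of_eq rfl
            · exact hd0
        calc ∑ j ∈ Finset.range (numIntervals p q i + 1),
              f ((j : ℝ) * spacing p q i + c, layerY p q i)
            ≤ ∑ j ∈ Finset.range (numIntervals p q i + 1), (if j = 0 then 0 else d) :=
              Finset.sum_le_sum hstep
          _ = (numIntervals p q i : ℝ) * d := by
              have hsplit : ∀ j : ℕ, (if j = 0 then (0:ℝ) else d) = d - (if j = 0 then d else 0) := by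
                intro j; split_ifs <;> ring
              rw [Finset.sum_congr rfl (fun j _ => hsplit j), Finset.sum_sub_distrib,
                Finset.sum_const, Finset.sum_ite_eq' (Finset.range (numIntervals p q i + 1)) 0
                  (fun _ => d), if_pos (Finset.mem_range.mpr (by omega))]
              simp only [Finset.card_range]
              push_cast
              ring
          _ ≤ C := by
              have h1 : d ≤ 9 / (8*(q:ℝ)) * spacing p q i := by
                rw [hd, hS]
                exact dist_bound hp hq (q - i) i (by omega)
              have h2 : (numIntervals p q i : ℝ) ≤ (q:ℝ) ^ ((p+1) * (i:ℝ)) :=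
                numIntervals_le hq i
              have h3 := pow_mul_spacing (p := p) hq i
              have hsp := spacing_pos (p := p) hq i
              have hpow : (0:ℝ) < (q:ℝ) ^ ((p+1) * (i:ℝ)) := rpow_pos hq _
              rw [hC]
              calc (numIntervals p q i : ℝ) * d ≤ (q:ℝ) ^ ((p+1) * (i:ℝ)) * (9 / (8*(q:ℝ)) * spacing p q i) := by
                    apply mul_le_mul h2 h1 hd0 hpow.le
                _ = 9 / (8*(q:ℝ)) * ((q:ℝ) ^ ((p+1) * (i:ℝ)) * spacing p q i) := by ring
                _ = 9 / (8*(q:ℝ)) * bigM p q := by rw [h3]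
  have final : ∑ i ∈ Finset.range (q+1), (if i = 0 ∨ i = q then (0:ℝ) else C)
      = ((q:ℝ) - 1) * C := by
    have hfilter : (Finset.range (q+1)).filter (fun i => ¬(i = 0 ∨ i = q)) = Finset.Ioo 0 q := by
      ext i
      simp only [Finset.mem_filter, Finset.mem_range, Finset.mem_Ioo]
      omega
    rw [Finset.sum_ite, hfilter]
    simp only [Finset.sum_const, Nat.card_Ioo]
    rw [smul_zero, zero_add, nsmul_eq_mul, Nat.cast_sub (by omega : 1 ≤ q - 0)]
    simp only [Nat.sub_zero]
    push_cast
    ring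
  calc ∑ v ∈ W, (S - v.2) = ∑ v ∈ W, f v := step1
    _ ≤ ∑ v ∈ genV p q c, f v := step2
    _ = ∑ i ∈ Finset.range (q+1), ∑ j ∈ Finset.range (numIntervals p q i + 1),
          f ((j : ℝ) * spacing p q i + c, layerY p q i) := step3
    _ ≤ ∑ i ∈ Finset.range (q+1), (if i = 0 ∨ i = q then 0 else C) :=
        Finset.sum_le_sum row_bound
    _ = ((q:ℝ) - 1) * C := final

end Sums
end TP

namespace TP

section Wit

variable {p : ℝ} {q : ℕ}

lemma app_ne_nil (A B : List Pt) (hA : A ≠ []) : A ++ B ≠ [] := fun hc =>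
  hA (List.append_eq_nil_iff.mp hc).1

lemma head_append_of_ne_nil (A B : List Pt) (hA : A ≠ []) (h : A ++ B ≠ []) :
    (A ++ B).head h = A.head hA := by
  rw [List.head_append]
  rw [dif_neg]
  simpa [List.isEmpty_iff] using hA

lemma getLast_append_of_ne_nil (A B : List Pt) (hB : B ≠ []) (h : A ++ B ≠ []) :
    (A ++ B).getLast h = B.getLast hB := by
  rw [List.getLast_append]
  rw [dif_neg]
  simpa [List.isEmpty_iff] using hB

lemma mem_genV_of (hq : 3 ≤ q) (c : ℝ) (i j : ℕ) (hi : i ≤ q) (hj : j ≤ numIntervals p q i) :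
    ((j:ℝ) * spacing p q i + c, layerY p q i) ∈ genV p q c := by
  rw [genV]
  exact Finset.mem_biUnion.mpr ⟨i, Finset.mem_range.mpr (by omega),
    Finset.mem_image.mpr ⟨j, Finset.mem_range.mpr (by omega), rfl⟩⟩

lemma numIntervals_zero_ge : 1 ≤ numIntervals p q 0 := by
  apply Nat.le_floor
  rw [Nat.cast_zero, mul_zero, Real.rpow_zero]
  norm_num

lemma numIntervals_q_ge (hp : 1 ≤ p) (hq : 3 ≤ q) : 1 ≤ numIntervals p q q := by
  apply Nat.le_floor
  have := bigM_ge_nine hp hq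
  rw [bigM] at this
  push_cast
  linarith

lemma wit_00 (hq : 3 ≤ q) : (((0:ℝ), (0:ℝ)) : Pt) ∈ VIq p q := by
  rw [mem_VIq_iff]
  left
  rw [V1_eq]
  have h := mem_genV_of (p := p) hq 0 0 0 (by omega) (by omega)
  simpa [layerY_zero] using h

lemma wit_1S (hp : 1 ≤ p) (hq : 3 ≤ q) : (((1:ℝ), layerY p q q) : Pt) ∈ VIq p q := by
  rw [mem_VIq_iff]
  left
  rw [V1_eq]
  have h := mem_genV_of (p := p) hq 0 q 1 (le_refl q) (numIntervals_q_ge hp hq)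
  simpa [spacing_self hq] using h

lemma wit_M0 (hq : 3 ≤ q) : ((bigM p q, (0:ℝ)) : Pt) ∈ VIq p q := by
  rw [mem_VIq_iff]
  left
  rw [V1_eq]
  have h := mem_genV_of (p := p) hq 0 0 1 (by omega) numIntervals_zero_ge
  simpa [spacing_zero hq, layerY_zero] using h

lemma wit_M1S (hp : 1 ≤ p) (hq : 3 ≤ q) : ((bigM p q + 1, layerY p q q) : Pt) ∈ VIq p q := by
  rw [mem_VIq_iff]
  right; right; left
  rw [V3]
  apply Finset.mem_image.mpr
  refine ⟨(1:ℕ), ?_, by norm_num⟩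
  have h2 := floor_bigM_ge hp hq
  have hex : ∃ m : ℕ, (1 ≤ m ∧ m ≤ Nat.floor (bigM p q) - 1) ∧ (m:ℝ) = ((1:ℕ):ℝ) :=
    ⟨1, ⟨le_refl 1, by omega⟩, rfl⟩
  simpa using hex

lemma wit_2M0 (hq : 3 ≤ q) : ((2 * bigM p q, (0:ℝ)) : Pt) ∈ VIq p q := by
  rw [mem_VIq_iff]
  right; left
  rw [V2_eq]
  have h := mem_genV_of (p := p) hq (2 * bigM p q) 0 0 (by omega) (by omega)
  simpa [layerY_zero] using h

lemma wit_2M1S (hp : 1 ≤ p) (hq : 3 ≤ q) :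
    ((1 + 2 * bigM p q, layerY p q q) : Pt) ∈ VIq p q := by
  rw [mem_VIq_iff]
  right; left
  rw [V2_eq]
  have h := mem_genV_of (p := p) hq (2 * bigM p q) q 1 (le_refl q) (numIntervals_q_ge hp hq)
  simpa [spacing_self hq] using h

lemma wit_3M0 (hq : 3 ≤ q) : ((3 * bigM p q, (0:ℝ)) : Pt) ∈ VIq p q := by
  rw [mem_VIq_iff]
  right; left
  rw [V2_eq]
  have h := mem_genV_of (p := p) hq (2 * bigM p q) 0 1 (by omega) numIntervals_zero_ge
  rw [spacing_zero hq, layerY_zero] at h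
  have he : ((3 * bigM p q, (0:ℝ)) : Pt) = (((1:ℕ):ℝ) * bigM p q + 2 * bigM p q, (0:ℝ)) := by
    rw [Prod.mk.injEq]
    constructor
    · push_cast; ring
    · rfl
  rw [he]
  exact h

lemma final_arith {qr M S : ℝ} (hq3 : (3:ℝ) ≤ qr) (hM : 0 < M) (hS0 : 0 ≤ S)
    (hSle : S ≤ 9 / (8*qr) * M) :
    6 * M + 11 * S + 4 * ((qr - 1) * (9 / (8*qr) * M)) ≤ 14 * M := by
  have h1 : 11 * S ≤ 11 * (9 / (8*qr) * M) := by linarith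
  have e : 11 * (9 / (8*qr) * M) + 4 * ((qr - 1) * (9 / (8*qr) * M))
      = (9 * (4*qr + 7)) / (8*qr) * M := by
    field_simp
    ring
  have h2 : (9 * (4*qr + 7)) / (8*qr) ≤ 8 := by
    rw [div_le_iff₀ (by positivity)]
    nlinarith
  have h3 : (9 * (4*qr + 7)) / (8*qr) * M ≤ 8 * M :=
    mul_le_mul_of_nonneg_right h2 hM.le
  linarith

end Wit
end TP

set_option maxHeartbeats 2000000

/-- For every real `p ≥ 1` and every odd integer `q ≥ 3`, the minimum length
(in the `p`-norm) of a tour of the instance `I_q` is at most `14 · q^{(p+1)q}`: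
there is a tour of `I_q` of length at most `14 · q^{(p+1)q}`. -/
theorem optimal_tour_length_upper_bound (p : ℝ) (hp : 1 ≤ p)
    (q : ℕ) (hq : 3 ≤ q) (hodd : Odd q) :
    ∃ L : List (ℝ × ℝ), IsTour (VIq p q) L ∧ cycleLength p L ≤ 14 * bigM p q := by
  classical
  clear hodd
  have hM9 : (9:ℝ) ≤ bigM p q := TP.bigM_ge_nine hp hq
  have hM0 : (0:ℝ) < bigM p q := TP.bigM_pos hq
  have hS0 : (0:ℝ) ≤ layerY p q q := TP.layerY_nonneg hq q
  have hq3 : (3:ℝ) ≤ (q:ℝ) := by exact_mod_cast hq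
  have hSle : layerY p q q ≤ 9/(8*(q:ℝ)) * bigM p q := by
    have h := TP.dist_bound hp hq q 0 (by omega)
    rw [TP.layerY_zero, TP.spacing_zero hq] at h
    simpa using h
  set W0 := (VIq p q).filter (fun v => v.1 = 0) with hW0
  set W1 := (VIq p q).filter (fun v => 0 < v.1 ∧ v.1 < bigM p q) with hW1
  set W2 := (VIq p q).filter (fun v => v.1 = bigM p q) with hW2
  set W3 := (VIq p q).filter (fun v => bigM p q < v.1 ∧ v.1 < 2 * bigM p q) with hW3
  set W4 := (VIq p q).filter (fun v => v.1 = 2 * bigM p q) with hW4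
  set W5 := (VIq p q).filter (fun v => 2 * bigM p q < v.1 ∧ v.1 < 3 * bigM p q) with hW5
  set W6 := (VIq p q).filter (fun v => v.1 = 3 * bigM p q) with hW6
  -- nonemptiness of the seven blocks
  have hne0 : TP.blk W0 ≠ [] := TP.blk_ne_nil W0
    ⟨((0:ℝ),(0:ℝ)), Finset.mem_filter.mpr ⟨TP.wit_00 hq, rfl⟩⟩
  have hne1 : TP.blk W1 ≠ [] := TP.blk_ne_nil W1
    ⟨((1:ℝ), layerY p q q), Finset.mem_filter.mpr ⟨TP.wit_1S hp hq,
      ⟨show (0:ℝ) < 1 by norm_num, show (1:ℝ) < bigM p q by linarith⟩⟩⟩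
  have hne2 : TP.blk W2 ≠ [] := TP.blk_ne_nil W2
    ⟨(bigM p q, (0:ℝ)), Finset.mem_filter.mpr ⟨TP.wit_M0 hq, rfl⟩⟩
  have hne3 : TP.blk W3 ≠ [] := TP.blk_ne_nil W3
    ⟨(bigM p q + 1, layerY p q q), Finset.mem_filter.mpr ⟨TP.wit_M1S hp hq,
      ⟨show bigM p q < bigM p q + 1 by linarith, show bigM p q + 1 < 2 * bigM p q by linarith⟩⟩⟩
  have hne4 : TP.blk W4 ≠ [] := TP.blk_ne_nil W4
    ⟨(2 * bigM p q, (0:ℝ)), Finset.mem_filter.mpr ⟨TP.wit_2M0 hq, rfl⟩⟩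
  have hne5 : TP.blk W5 ≠ [] := TP.blk_ne_nil W5
    ⟨(1 + 2 * bigM p q, layerY p q q), Finset.mem_filter.mpr ⟨TP.wit_2M1S hp hq,
      ⟨show 2 * bigM p q < 1 + 2 * bigM p q by linarith,
       show 1 + 2 * bigM p q < 3 * bigM p q by linarith⟩⟩⟩
  have hne6 : TP.blk W6 ≠ [] := TP.blk_ne_nil W6
    ⟨(3 * bigM p q, (0:ℝ)), Finset.mem_filter.mpr ⟨TP.wit_3M0 hq, rfl⟩⟩
  have hRne5 : TP.blk W5 ++ TP.blk W6 ≠ [] := TP.app_ne_nil _ _ hne5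
  have hRne4 : TP.blk W4 ++ (TP.blk W5 ++ TP.blk W6) ≠ [] := TP.app_ne_nil _ _ hne4
  have hRne3 : TP.blk W3 ++ (TP.blk W4 ++ (TP.blk W5 ++ TP.blk W6)) ≠ [] :=
    TP.app_ne_nil _ _ hne3
  have hRne2 : TP.blk W2 ++ (TP.blk W3 ++ (TP.blk W4 ++ (TP.blk W5 ++ TP.blk W6))) ≠ [] :=
    TP.app_ne_nil _ _ hne2
  have hRne1 : TP.blk W1 ++ (TP.blk W2 ++ (TP.blk W3 ++ (TP.blk W4 ++ (TP.blk W5 ++ TP.blk W6)))) ≠ [] :=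
    TP.app_ne_nil _ _ hne1
  have hLne : TP.blk W0 ++ (TP.blk W1 ++ (TP.blk W2 ++ (TP.blk W3 ++ (TP.blk W4 ++ (TP.blk W5 ++ TP.blk W6))))) ≠ [] :=
    TP.app_ne_nil _ _ hne0
  -- class-membership facts for block lists
  have hBP0 : ∀ v ∈ TP.blk W0, v ∈ VIq p q ∧ v.1 = 0 := fun v hv =>
    Finset.mem_filter.mp ((TP.mem_blk W0).1 hv)
  have hBP1 : ∀ v ∈ TP.blk W1, v ∈ VIq p q ∧ (0 < v.1 ∧ v.1 < bigM p q) := fun v hv =>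
    Finset.mem_filter.mp ((TP.mem_blk W1).1 hv)
  have hBP2 : ∀ v ∈ TP.blk W2, v ∈ VIq p q ∧ v.1 = bigM p q := fun v hv =>
    Finset.mem_filter.mp ((TP.mem_blk W2).1 hv)
  have hBP3 : ∀ v ∈ TP.blk W3, v ∈ VIq p q ∧ (bigM p q < v.1 ∧ v.1 < 2 * bigM p q) := fun v hv =>
    Finset.mem_filter.mp ((TP.mem_blk W3).1 hv)
  have hBP4 : ∀ v ∈ TP.blk W4, v ∈ VIq p q ∧ v.1 = 2 * bigM p q := fun v hv =>
    Finset.mem_filter.mp ((TP.mem_blk W4).1 hv)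
  have hBP5 : ∀ v ∈ TP.blk W5, v ∈ VIq p q ∧ (2 * bigM p q < v.1 ∧ v.1 < 3 * bigM p q) := fun v hv =>
    Finset.mem_filter.mp ((TP.mem_blk W5).1 hv)
  have hBP6 : ∀ v ∈ TP.blk W6, v ∈ VIq p q ∧ v.1 = 3 * bigM p q := fun v hv =>
    Finset.mem_filter.mp ((TP.mem_blk W6).1 hv)
  refine ⟨TP.blk W0 ++ (TP.blk W1 ++ (TP.blk W2 ++ (TP.blk W3 ++ (TP.blk W4 ++ (TP.blk W5 ++ TP.blk W6))))),
    ⟨?_, ?_⟩, ?_⟩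
  · -- Nodup
    have hx : ∀ (A B : List TP.Pt) (PA PB : TP.Pt → Prop),
        (∀ v ∈ A, PA v) → (∀ v ∈ B, PB v) → (∀ v, PA v → PB v → False) → A.Disjoint B :=
      fun A B PA PB hA hB hcon a haA haB => hcon a (hA a haA) (hB a haB)
    refine List.nodup_append.mpr ⟨TP.blk_nodup W0, ?_, ?_⟩
    · refine List.nodup_append.mpr ⟨TP.blk_nodup W1, ?_, ?_⟩
      · refine List.nodup_append.mpr ⟨TP.blk_nodup W2, ?_, ?_⟩
        · refine List.nodup_append.mpr ⟨TP.blk_nodup W3, ?_, ?_⟩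
          · refine List.nodup_append.mpr ⟨TP.blk_nodup W4, ?_, ?_⟩
            · exact List.nodup_append.mpr ⟨TP.blk_nodup W5, TP.blk_nodup W6,
                fun a h5 b h6 hab => by
                  subst hab
                  have c5 := (hBP5 a h5).2; have c6 := (hBP6 a h6).2; linarith [c5.2, c6.ge]⟩
            · intro a h4 b hrest hab
              subst hab
              have c4 := (hBP4 a h4).2
              rcases List.mem_append.mp hrest with h | h
              · have c := (hBP5 a h).2; linarith [c.1]
              · have c := (hBP6 a h).2; linarith
          · intro a h3 b hrest hab
            subst hab
            have c3 := (hBP3 a h3).2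
            rcases List.mem_append.mp hrest with h | hrest
            · have c := (hBP4 a h).2; linarith [c3.2]
            rcases List.mem_append.mp hrest with h | h
            · have c := (hBP5 a h).2; linarith [c3.2, c.1]
            · have c := (hBP6 a h).2; linarith [c3.2]
        · intro a h2 b hrest hab
          subst hab
          have c2 := (hBP2 a h2).2
          rcases List.mem_append.mp hrest with h | hrest
          · have c := (hBP3 a h).2; linarith [c.1]
          rcases List.mem_append.mp hrest with h | hrest
          · have c := (hBP4 a h).2; linarith
          rcases List.mem_append.mp hrest with h | h
          · have c := (hBP5 a h).2; linarith [c.1]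
          · have c := (hBP6 a h).2; linarith
      · intro a h1 b hrest hab
        subst hab
        have c1 := (hBP1 a h1).2
        rcases List.mem_append.mp hrest with h | hrest
        · have c := (hBP2 a h).2; linarith [c1.2]
        rcases List.mem_append.mp hrest with h | hrest
        · have c := (hBP3 a h).2; linarith [c1.2, c.1]
        rcases List.mem_append.mp hrest with h | hrest
        · have c := (hBP4 a h).2; linarith [c1.2]
        rcases List.mem_append.mp hrest with h | h
        · have c := (hBP5 a h).2; linarith [c1.2, c.1]
        · have c := (hBP6 a h).2; linarith [c1.2]
    · intro a h0 b hrest hab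
      subst hab
      have c0 := (hBP0 a h0).2
      rcases List.mem_append.mp hrest with h | hrest
      · have c := (hBP1 a h).2; linarith [c.1]
      rcases List.mem_append.mp hrest with h | hrest
      · have c := (hBP2 a h).2; linarith
      rcases List.mem_append.mp hrest with h | hrest
      · have c := (hBP3 a h).2; linarith [c.1]
      rcases List.mem_append.mp hrest with h | hrest
      · have c := (hBP4 a h).2; linarith
      rcases List.mem_append.mp hrest with h | h
      · have c := (hBP5 a h).2; linarith [c.1]
      · have c := (hBP6 a h).2; linarith
  · -- toFinset
    simp only [List.toFinset_append, TP.blk_toFinset]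
    ext v
    simp only [Finset.mem_union]
    constructor
    · intro h
      rcases h with h | h | h | h | h | h | h <;>
        exact (Finset.mem_filter.mp h).1
    · intro hv
      have hb := TP.VIq_bounds hp hq hv
      obtain ⟨hx0, hx3, -, -⟩ := hb
      have hclass : v.1 = 0 ∨ (0 < v.1 ∧ v.1 < bigM p q) ∨ v.1 = bigM p q ∨
          (bigM p q < v.1 ∧ v.1 < 2 * bigM p q) ∨ v.1 = 2 * bigM p q ∨
          (2 * bigM p q < v.1 ∧ v.1 < 3 * bigM p q) ∨ v.1 = 3 * bigM p q := by
        by_cases e0 : v.1 = 0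
        · tauto
        by_cases e1 : v.1 = bigM p q
        · tauto
        by_cases e2 : v.1 = 2 * bigM p q
        · tauto
        by_cases e3 : v.1 = 3 * bigM p q
        · tauto
        rcases lt_trichotomy v.1 (bigM p q) with h | h | h
        · exact Or.inr (Or.inl ⟨lt_of_le_of_ne hx0 (Ne.symm e0), h⟩)
        · tauto
        rcases lt_trichotomy v.1 (2 * bigM p q) with g | g | g
        · tauto
        · tauto
        · have : v.1 < 3 * bigM p q := lt_of_le_of_ne hx3 e3
          tauto
      rcases hclass with h | h | h | h | h | h | h
      · exact Or.inl (Finset.mem_filter.mpr ⟨hv, h⟩)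
      · exact Or.inr (Or.inl (Finset.mem_filter.mpr ⟨hv, h⟩))
      · exact Or.inr (Or.inr (Or.inl (Finset.mem_filter.mpr ⟨hv, h⟩)))
      · exact Or.inr (Or.inr (Or.inr (Or.inl (Finset.mem_filter.mpr ⟨hv, h⟩))))
      · exact Or.inr (Or.inr (Or.inr (Or.inr (Or.inl (Finset.mem_filter.mpr ⟨hv, h⟩)))))
      · exact Or.inr (Or.inr (Or.inr (Or.inr (Or.inr (Or.inl (Finset.mem_filter.mpr ⟨hv, h⟩))))))
      · exact Or.inr (Or.inr (Or.inr (Or.inr (Or.inr (Or.inr (Finset.mem_filter.mpr ⟨hv, h⟩))))))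
  · -- length bound
    have A0 := hBP0 _ (List.head_mem hne0)
    have Z0 := hBP0 _ (List.getLast_mem hne0)
    have A1 := hBP1 _ (List.head_mem hne1)
    have Z1 := hBP1 _ (List.getLast_mem hne1)
    have A2 := hBP2 _ (List.head_mem hne2)
    have Z2 := hBP2 _ (List.getLast_mem hne2)
    have A3 := hBP3 _ (List.head_mem hne3)
    have Z3 := hBP3 _ (List.getLast_mem hne3)
    have A4 := hBP4 _ (List.head_mem hne4)
    have Z4 := hBP4 _ (List.getLast_mem hne4)
    have A5 := hBP5 _ (List.head_mem hne5)
    have Z5 := hBP5 _ (List.getLast_mem hne5)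
    have A6 := hBP6 _ (List.head_mem hne6)
    have Z6 := hBP6 _ (List.getLast_mem hne6)
    have YA0 := TP.VIq_bounds hp hq A0.1
    have YZ0 := TP.VIq_bounds hp hq Z0.1
    have YA1 := TP.VIq_bounds hp hq A1.1
    have YZ1 := TP.VIq_bounds hp hq Z1.1
    have YA2 := TP.VIq_bounds hp hq A2.1
    have YZ2 := TP.VIq_bounds hp hq Z2.1
    have YA3 := TP.VIq_bounds hp hq A3.1
    have YZ3 := TP.VIq_bounds hp hq Z3.1
    have YA4 := TP.VIq_bounds hp hq A4.1
    have YZ4 := TP.VIq_bounds hp hq Z4.1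
    have YA5 := TP.VIq_bounds hp hq A5.1
    have YZ5 := TP.VIq_bounds hp hq Z5.1
    have YA6 := TP.VIq_bounds hp hq A6.1
    have YZ6 := TP.VIq_bounds hp hq Z6.1
    -- block bounds
    have PB0 : TP.pathLen p (TP.blk W0) ≤
        ((TP.blk W0).getLast hne0).1 - ((TP.blk W0).head hne0).1 + layerY p q q := by
      have h1 := TP.pathLen_le_sums hp (TP.blk W0)
      have h2 := TP.pathSum_fst_blk W0 hne0
      have h3 := TP.pathSum_snd_blk_const W0 0 (layerY p q q)
        (fun v hv => (Finset.mem_filter.mp hv).2)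
        (fun v hv => by
          have hb := TP.VIq_bounds hp hq (Finset.mem_filter.mp hv).1
          exact ⟨hb.2.2.1, hb.2.2.2⟩) hne0
      linarith
    have PB2 : TP.pathLen p (TP.blk W2) ≤
        ((TP.blk W2).getLast hne2).1 - ((TP.blk W2).head hne2).1 + layerY p q q := by
      have h1 := TP.pathLen_le_sums hp (TP.blk W2)
      have h2 := TP.pathSum_fst_blk W2 hne2
      have h3 := TP.pathSum_snd_blk_const W2 (bigM p q) (layerY p q q)
        (fun v hv => (Finset.mem_filter.mp hv).2)
        (fun v hv => by
          have hb := TP.VIq_bounds hp hq (Finset.mem_filter.mp hv).1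
          exact ⟨hb.2.2.1, hb.2.2.2⟩) hne2
      linarith
    have PB4 : TP.pathLen p (TP.blk W4) ≤
        ((TP.blk W4).getLast hne4).1 - ((TP.blk W4).head hne4).1 + layerY p q q := by
      have h1 := TP.pathLen_le_sums hp (TP.blk W4)
      have h2 := TP.pathSum_fst_blk W4 hne4
      have h3 := TP.pathSum_snd_blk_const W4 (2 * bigM p q) (layerY p q q)
        (fun v hv => (Finset.mem_filter.mp hv).2)
        (fun v hv => by
          have hb := TP.VIq_bounds hp hq (Finset.mem_filter.mp hv).1
          exact ⟨hb.2.2.1, hb.2.2.2⟩) hne4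
      linarith
    have PB6 : TP.pathLen p (TP.blk W6) ≤
        ((TP.blk W6).getLast hne6).1 - ((TP.blk W6).head hne6).1 + layerY p q q := by
      have h1 := TP.pathLen_le_sums hp (TP.blk W6)
      have h2 := TP.pathSum_fst_blk W6 hne6
      have h3 := TP.pathSum_snd_blk_const W6 (3 * bigM p q) (layerY p q q)
        (fun v hv => (Finset.mem_filter.mp hv).2)
        (fun v hv => by
          have hb := TP.VIq_bounds hp hq (Finset.mem_filter.mp hv).1
          exact ⟨hb.2.2.1, hb.2.2.2⟩) hne6
      linarith
    have PB1 : TP.pathLen p (TP.blk W1) ≤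
        ((TP.blk W1).getLast hne1).1 - ((TP.blk W1).head hne1).1
          + 2 * (((q:ℝ) - 1) * (9 / (8*(q:ℝ)) * bigM p q)) := by
      have h1 := TP.pathLen_le_sums hp (TP.blk W1)
      have h2 := TP.pathSum_fst_blk W1 hne1
      have h3 := TP.pathSum_snd_blk_double W1 (layerY p q q)
        (fun v hv => (TP.VIq_bounds hp hq (Finset.mem_filter.mp hv).1).2.2.2)
      have h4 := TP.sum_d_bound hp hq 0 W1 (fun v hv => by
        obtain ⟨hvi, hcl⟩ := Finset.mem_filter.mp hv
        exact ⟨TP.mem_genV0_of_x hp hq hvi hcl.1 hcl.2, hcl.1, by rw [zero_add]; exact hcl.2⟩)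
      linarith
    have PB5 : TP.pathLen p (TP.blk W5) ≤
        ((TP.blk W5).getLast hne5).1 - ((TP.blk W5).head hne5).1
          + 2 * (((q:ℝ) - 1) * (9 / (8*(q:ℝ)) * bigM p q)) := by
      have h1 := TP.pathLen_le_sums hp (TP.blk W5)
      have h2 := TP.pathSum_fst_blk W5 hne5
      have h3 := TP.pathSum_snd_blk_double W5 (layerY p q q)
        (fun v hv => (TP.VIq_bounds hp hq (Finset.mem_filter.mp hv).1).2.2.2)
      have h4 := TP.sum_d_bound hp hq (2 * bigM p q) W5 (fun v hv => by
        obtain ⟨hvi, hcl⟩ := Finset.mem_filter.mp hv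
        refine ⟨TP.mem_genV2_of_x hp hq hvi hcl.1 hcl.2, hcl.1, by linarith [hcl.2]⟩)
      linarith
    have PB3 : TP.pathLen p (TP.blk W3) ≤
        ((TP.blk W3).getLast hne3).1 - ((TP.blk W3).head hne3).1 := by
      have h1 := TP.pathLen_le_sums hp (TP.blk W3)
      have h2 := TP.pathSum_fst_blk W3 hne3
      have h3 := TP.pathSum_snd_blk_double W3 (layerY p q q)
        (fun v hv => (TP.VIq_bounds hp hq (Finset.mem_filter.mp hv).1).2.2.2)
      have h4 : ∑ v ∈ W3, (layerY p q q - v.2) = 0 := Finset.sum_eq_zero (fun v hv => by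
        obtain ⟨hvi, hcl⟩ := Finset.mem_filter.mp hv
        rw [TP.top_y_of_x hp hq hvi hcl.1 hcl.2, sub_self])
      rw [h4] at h3
      linarith
    -- junction bounds
    have J0 : pdist p ((TP.blk W0).getLast hne0) ((TP.blk W1).head hne1) ≤
        ((TP.blk W1).head hne1).1 - ((TP.blk W0).getLast hne0).1 + layerY p q q := by
      have h1 := TP.pdist_le hp ((TP.blk W0).getLast hne0) ((TP.blk W1).head hne1)
      have hx : |((TP.blk W0).getLast hne0).1 - ((TP.blk W1).head hne1).1| =
          ((TP.blk W1).head hne1).1 - ((TP.blk W0).getLast hne0).1 := by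
        rw [abs_sub_comm]
        exact abs_of_nonneg (by linarith [Z0.2, A1.2.1])
      have hy : |((TP.blk W0).getLast hne0).2 - ((TP.blk W1).head hne1).2| ≤ layerY p q q := by
        rw [abs_sub_le_iff]
        constructor <;> linarith [YZ0.2.2.1, YZ0.2.2.2, YA1.2.2.1, YA1.2.2.2]
      linarith
    have J1 : pdist p ((TP.blk W1).getLast hne1) ((TP.blk W2).head hne2) ≤
        ((TP.blk W2).head hne2).1 - ((TP.blk W1).getLast hne1).1 + layerY p q q := by
      have h1 := TP.pdist_le hp ((TP.blk W1).getLast hne1) ((TP.blk W2).head hne2)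
      have hx : |((TP.blk W1).getLast hne1).1 - ((TP.blk W2).head hne2).1| =
          ((TP.blk W2).head hne2).1 - ((TP.blk W1).getLast hne1).1 := by
        rw [abs_sub_comm]
        exact abs_of_nonneg (by linarith [Z1.2.2, A2.2])
      have hy : |((TP.blk W1).getLast hne1).2 - ((TP.blk W2).head hne2).2| ≤ layerY p q q := by
        rw [abs_sub_le_iff]
        constructor <;> linarith [YZ1.2.2.1, YZ1.2.2.2, YA2.2.2.1, YA2.2.2.2]
      linarith
    have J2 : pdist p ((TP.blk W2).getLast hne2) ((TP.blk W3).head hne3) ≤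
        ((TP.blk W3).head hne3).1 - ((TP.blk W2).getLast hne2).1 + layerY p q q := by
      have h1 := TP.pdist_le hp ((TP.blk W2).getLast hne2) ((TP.blk W3).head hne3)
      have hx : |((TP.blk W2).getLast hne2).1 - ((TP.blk W3).head hne3).1| =
          ((TP.blk W3).head hne3).1 - ((TP.blk W2).getLast hne2).1 := by
        rw [abs_sub_comm]
        exact abs_of_nonneg (by linarith [Z2.2, A3.2.1])
      have hy : |((TP.blk W2).getLast hne2).2 - ((TP.blk W3).head hne3).2| ≤ layerY p q q := by
        rw [abs_sub_le_iff]
        constructor <;> linarith [YZ2.2.2.1, YZ2.2.2.2, YA3.2.2.1, YA3.2.2.2]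
      linarith
    have J3 : pdist p ((TP.blk W3).getLast hne3) ((TP.blk W4).head hne4) ≤
        ((TP.blk W4).head hne4).1 - ((TP.blk W3).getLast hne3).1 + layerY p q q := by
      have h1 := TP.pdist_le hp ((TP.blk W3).getLast hne3) ((TP.blk W4).head hne4)
      have hx : |((TP.blk W3).getLast hne3).1 - ((TP.blk W4).head hne4).1| =
          ((TP.blk W4).head hne4).1 - ((TP.blk W3).getLast hne3).1 := by
        rw [abs_sub_comm]
        exact abs_of_nonneg (by linarith [Z3.2.2, A4.2])
      have hy : |((TP.blk W3).getLast hne3).2 - ((TP.blk W4).head hne4).2| ≤ layerY p q q := by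
        rw [abs_sub_le_iff]
        constructor <;> linarith [YZ3.2.2.1, YZ3.2.2.2, YA4.2.2.1, YA4.2.2.2]
      linarith
    have J4 : pdist p ((TP.blk W4).getLast hne4) ((TP.blk W5).head hne5) ≤
        ((TP.blk W5).head hne5).1 - ((TP.blk W4).getLast hne4).1 + layerY p q q := by
      have h1 := TP.pdist_le hp ((TP.blk W4).getLast hne4) ((TP.blk W5).head hne5)
      have hx : |((TP.blk W4).getLast hne4).1 - ((TP.blk W5).head hne5).1| =
          ((TP.blk W5).head hne5).1 - ((TP.blk W4).getLast hne4).1 := by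
        rw [abs_sub_comm]
        exact abs_of_nonneg (by linarith [Z4.2, A5.2.1])
      have hy : |((TP.blk W4).getLast hne4).2 - ((TP.blk W5).head hne5).2| ≤ layerY p q q := by
        rw [abs_sub_le_iff]
        constructor <;> linarith [YZ4.2.2.1, YZ4.2.2.2, YA5.2.2.1, YA5.2.2.2]
      linarith
    have J5 : pdist p ((TP.blk W5).getLast hne5) ((TP.blk W6).head hne6) ≤
        ((TP.blk W6).head hne6).1 - ((TP.blk W5).getLast hne5).1 + layerY p q q := by
      have h1 := TP.pdist_le hp ((TP.blk W5).getLast hne5) ((TP.blk W6).head hne6)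
      have hx : |((TP.blk W5).getLast hne5).1 - ((TP.blk W6).head hne6).1| =
          ((TP.blk W6).head hne6).1 - ((TP.blk W5).getLast hne5).1 := by
        rw [abs_sub_comm]
        exact abs_of_nonneg (by linarith [Z5.2.2, A6.2])
      have hy : |((TP.blk W5).getLast hne5).2 - ((TP.blk W6).head hne6).2| ≤ layerY p q q := by
        rw [abs_sub_le_iff]
        constructor <;> linarith [YZ5.2.2.1, YZ5.2.2.2, YA6.2.2.1, YA6.2.2.2]
      linarith
    have JW : pdist p ((TP.blk W6).getLast hne6) ((TP.blk W0).head hne0) ≤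
        3 * bigM p q + layerY p q q := by
      have h1 := TP.pdist_le hp ((TP.blk W6).getLast hne6) ((TP.blk W0).head hne0)
      have hx : |((TP.blk W6).getLast hne6).1 - ((TP.blk W0).head hne0).1| = 3 * bigM p q := by
        rw [Z6.2, A0.2, sub_zero]
        exact abs_of_nonneg (by linarith)
      have hy : |((TP.blk W6).getLast hne6).2 - ((TP.blk W0).head hne0).2| ≤ layerY p q q := by
        rw [abs_sub_le_iff]
        constructor <;> linarith [YZ6.2.2.1, YZ6.2.2.2, YA0.2.2.1, YA0.2.2.2]
      linarith
    -- decomposition of the cycle length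
    rw [TP.cycleLength_eq p _ hLne]
    have hHead := TP.head_append_of_ne_nil (TP.blk W0) _ hne0 hLne
    have hLast : (TP.blk W0 ++ (TP.blk W1 ++ (TP.blk W2 ++ (TP.blk W3 ++
        (TP.blk W4 ++ (TP.blk W5 ++ TP.blk W6)))))).getLast hLne
        = (TP.blk W6).getLast hne6 := by
      rw [TP.getLast_append_of_ne_nil _ _ hRne1 hLne,
          TP.getLast_append_of_ne_nil _ _ hRne2 hRne1,
          TP.getLast_append_of_ne_nil _ _ hRne3 hRne2,
          TP.getLast_append_of_ne_nil _ _ hRne4 hRne3,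
          TP.getLast_append_of_ne_nil _ _ hRne5 hRne4,
          TP.getLast_append_of_ne_nil _ _ hne6 hRne5]
    rw [hHead, hLast]
    rw [TP.pathLen_append p _ _ hne0 hRne1, TP.head_append_of_ne_nil _ _ hne1 hRne1,
        TP.pathLen_append p _ _ hne1 hRne2, TP.head_append_of_ne_nil _ _ hne2 hRne2,
        TP.pathLen_append p _ _ hne2 hRne3, TP.head_append_of_ne_nil _ _ hne3 hRne3,
        TP.pathLen_append p _ _ hne3 hRne4, TP.head_append_of_ne_nil _ _ hne4 hRne4,
        TP.pathLen_append p _ _ hne4 hRne5, TP.head_append_of_ne_nil _ _ hne5 hRne5,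
        TP.pathLen_append p _ _ hne5 hne6]
    -- final arithmetic
    have hD0 : (0:ℝ) ≤ ((q:ℝ) - 1) * (9 / (8*(q:ℝ)) * bigM p q) := by
      apply mul_nonneg (by linarith)
      positivity
    have key : 6 * bigM p q + 11 * layerY p q q
        + 4 * (((q:ℝ) - 1) * (9 / (8*(q:ℝ)) * bigM p q)) ≤ 14 * bigM p q :=
      TP.final_arith hq3 hM0 hS0 hSle
    linarith [PB0, PB1, PB2, PB3, PB4, PB5, PB6, J0, J1, J2, J3, J4, J5, JW,
      A0.2, Z6.2]
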